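/- Fix integers d ≥ 2 and n > k ≥ 0, and suppose n > 2k. Let M be the set of multisets of size d with elements in ℤ/nℤ, on which ℤ acts by x + S := { x + y mod n : y ∈ S } (as a multiset). Let R ⊆ M be the set of multisets all of whose elements lie in {0,1,…,k} (identified with their images in ℤ/nℤ) and which contain 0 at least once. Then any two distinct elements of R lie in distinct ℤ-orbits of M. -/
import Mathlib


/-- If `n > 2k`, then any two distinct multisets of size `d` with elements in
`{0,…,k} ⊆ ℤ/nℤ` containing `0` lie in distinct orbits of the shift action of `ℤ` on
multisets over `ℤ/nℤ`. -/
theorem distinct_orbits_of_small_width_multisets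
    (d n k : ℕ) (hd : 2 ≤ d) (hkn : k < n) (h2k : 2 * k < n)
    (S S' : Multiset (ZMod n))
    (hScard : Multiset.card S = d) (hS0 : (0 : ZMod n) ∈ S)
    (hSel : ∀ y ∈ S, ∃ m : ℕ, m ≤ k ∧ y = (m : ZMod n))
    (hS'card : Multiset.card S' = d) (hS'0 : (0 : ZMod n) ∈ S')
    (hS'el : ∀ y ∈ S', ∃ m : ℕ, m ≤ k ∧ y = (m : ZMod n))
    (hne : S ≠ S') :
    ∀ x : ℤ, S.map (fun y => (x : ZMod n) + y) ≠ S' := by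
  intro x heq
  set c : ZMod n := (x : ZMod n) with hc
  -- c + 0 ∈ S'
  have hcS' : c ∈ S' := by
    rw [← heq]
    exact Multiset.mem_map.mpr ⟨0, hS0, by ring⟩
  obtain ⟨m', hm'k, hcm'⟩ := hS'el c hcS'
  -- 0 ∈ S' means ∃ y ∈ S, c + y = 0
  have h0 : (0 : ZMod n) ∈ S.map (fun y => c + y) := heq ▸ hS'0
  obtain ⟨y, hyS, hy0⟩ := Multiset.mem_map.mp h0
  obtain ⟨m, hmk, hym⟩ := hSel y hyS
  have hn0 : NeZero n := ⟨by omega⟩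
  have hsum : ((m' + m : ℕ) : ZMod n) = 0 := by
    push_cast
    rw [← hcm', ← hym]
    simpa using hy0
  have hdvd : n ∣ m' + m := (ZMod.natCast_eq_zero_iff _ _).mp hsum
  have hlt : m' + m < n := by omega
  have hzero : m' + m = 0 := Nat.eq_zero_of_dvd_of_lt hdvd hlt
  have hc0 : c = 0 := by rw [hcm']; simp [Nat.eq_zero_of_add_eq_zero_right hzero]
  apply hne
  rw [← heq, hc0]
  simp
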